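/- Let a 1 × n board placement have fewer than c empty slots and suppose each boundary between two consecutive placed edge-tiles that is labeled with a vertex color forces a distinguished vertex tile to be either absent from the board or adjacent to a blank/border, where each vertex tile can be forced by at most 4 such boundaries, and at most 3c + 2 vertex tiles can be so forced. Then fewer than 4(3c + 2) placed edge tiles share a vertex-colored boundary with another edge tile. -/
import Mathlib

/-- Counting core of Lemma 7: on a board with `b < c` blank slots, each bad boundary
`x` (between two consecutive edge tiles sharing a vertex-colored edge) forces a
vertex tile `f x` belonging to a set `VT` of forced vertex tiles of size at most
`3b + 2 ≤ 3c + 2`, and each vertex tile is forced by at most `4` bad boundaries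
(since in- and out-degrees are at most 2).  Hence fewer than `4(3c + 2)` placed edge
tiles share a vertex-colored boundary with another edge tile. -/
theorem stmt18 {β γ : Type} [DecidableEq γ] (c b : ℕ) (hb : b < c)
    (Bad : Finset β) (VT : Finset γ) (f : β → γ)
    (hf : ∀ x ∈ Bad, f x ∈ VT) (hVT : VT.card ≤ 3 * b + 2)
    (hfib : ∀ t : γ, (Bad.filter (fun x => f x = t)).card ≤ 4) :
    Bad.card < 4 * (3 * c + 2) := by
  have h := Finset.card_le_mul_card_image_of_maps_to hf 4 (fun a _ => hfib a)
  have : VT.card * 4 ≤ (3 * b + 2) * 4 := by nlinarith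
  omega
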